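/- Let H be a 3×3 game with zero diagonal, interior equilibrium ρ, and H_{ij} + H_{ji} = γ + η_{ij} for i ≠ j with γ > 0 and max_{i,j}|η_{ij}| < γ/2 (almost constant sum). Then V(u) = ∑_i (u_i − ρ_i log u_i) is a strict Lyapunov function for the replicator equation: along any interior solution, dV/dt = ∑_{i<j}(u_i−ρ_i)(H_{ij}+H_{ji})(u_j−ρ_j) ≤ −(γ/2 − max|η_{ij}|)·∑_i (u_i−ρ_i)² ≤ 0, with equality only at u = ρ. -/

import Mathlib

lemma aux_ineq (γ M a b c x0 x1 x2 : ℝ)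
    (hb01 : |a - γ| ≤ M) (hb02 : |b - γ| ≤ M) (hb12 : |c - γ| ≤ M)
    (s0 : x0 + x1 + x2 = 0) :
    x0 * a * x1 + x0 * b * x2 + x1 * c * x2
      ≤ -(γ / 2 - M) * (x0 ^ 2 + x1 ^ 2 + x2 ^ 2) := by
  obtain ⟨a1, a2⟩ := abs_le.mp hb01
  obtain ⟨b1, b2⟩ := abs_le.mp hb02
  obtain ⟨c1, c2⟩ := abs_le.mp hb12
  have p01 : (a - γ) * (x0 * x1) ≤ M / 2 * (x0 ^ 2 + x1 ^ 2) := by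
    nlinarith [mul_nonneg (by linarith : (0:ℝ) ≤ M - (a - γ)) (sq_nonneg (x0 + x1)),
      mul_nonneg (by linarith : (0:ℝ) ≤ M + (a - γ)) (sq_nonneg (x0 - x1))]
  have p02 : (b - γ) * (x0 * x2) ≤ M / 2 * (x0 ^ 2 + x2 ^ 2) := by
    nlinarith [mul_nonneg (by linarith : (0:ℝ) ≤ M - (b - γ)) (sq_nonneg (x0 + x2)),
      mul_nonneg (by linarith : (0:ℝ) ≤ M + (b - γ)) (sq_nonneg (x0 - x2))]
  have p12 : (c - γ) * (x1 * x2) ≤ M / 2 * (x1 ^ 2 + x2 ^ 2) := by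
    nlinarith [mul_nonneg (by linarith : (0:ℝ) ≤ M - (c - γ)) (sq_nonneg (x1 + x2)),
      mul_nonneg (by linarith : (0:ℝ) ≤ M + (c - γ)) (sq_nonneg (x1 - x2))]
  have hpair : γ * (x0 * x1 + x0 * x2 + x1 * x2)
      = -(γ / 2) * (x0 ^ 2 + x1 ^ 2 + x2 ^ 2) := by
    linear_combination (γ * (x0 + x1 + x2) / 2) * s0
  linarith [p01, p02, p12, hpair]

set_option maxHeartbeats 1000000 in
/-- **Almost-constant-sum games: strict Lyapunov function.**
Let `H` be a 3×3 game with zero diagonal, interior equilibrium `ρ`, and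
`Hᵢⱼ + Hⱼᵢ = γ + ηᵢⱼ` for `i ≠ j` with `γ > 0` and `max|ηᵢⱼ| ≤ M < γ/2`.  Then
`V(u) = ∑ᵢ (uᵢ − ρᵢ log uᵢ)` is a strict Lyapunov function for the replicator equation:
along any interior solution, `dV/dt = ∑_{i<j} (uᵢ−ρᵢ)(Hᵢⱼ+Hⱼᵢ)(uⱼ−ρⱼ)`, which is
`≤ −(γ/2 − M)·∑ᵢ (uᵢ−ρᵢ)² ≤ 0`, with equality only at `u = ρ`. -/
theorem almost_constant_sum_lyapunov
    (H : Matrix (Fin 3) (Fin 3) ℝ) (γ M : ℝ) (hγ : 0 < γ) (hM : M < γ / 2)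
    (hdiag : ∀ i, H i i = 0)
    (hη : ∀ i j, i ≠ j → |H i j + H j i - γ| ≤ M)
    (ρ : Fin 3 → ℝ) (hρpos : ∀ i, 0 < ρ i) (hρsum : ∑ i, ρ i = 1)
    (hρfix : H.mulVec ρ 0 = H.mulVec ρ 1 ∧ H.mulVec ρ 1 = H.mulVec ρ 2)
    (u : ℝ → Fin 3 → ℝ)
    (hupos : ∀ t i, 0 < u t i) (husum : ∀ t, ∑ i, u t i = 1)
    (hu : ∀ t i, HasDerivAt (fun s => u s i)
      (u t i * (H.mulVec (u t) i - ∑ j, ∑ k, u t j * H j k * u t k)) t) :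
    ∀ t,
      HasDerivAt (fun s => ∑ i, (u s i - ρ i * Real.log (u s i)))
        (∑ i, ∑ j, if i < j then
          (u t i - ρ i) * (H i j + H j i) * (u t j - ρ j) else 0) t ∧
      (∑ i, ∑ j, if i < j then
          (u t i - ρ i) * (H i j + H j i) * (u t j - ρ j) else 0)
        ≤ -(γ / 2 - M) * ∑ i, (u t i - ρ i) ^ 2 ∧
      ((∑ i, ∑ j, if i < j then
          (u t i - ρ i) * (H i j + H j i) * (u t j - ρ j) else 0) = 0 →
        ∀ i, u t i = ρ i) := by
  intro t
  obtain ⟨e01, e12⟩ := hρfix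
  have h1 := husum t
  have h2 := hρsum
  simp only [Matrix.mulVec, dotProduct, Fin.sum_univ_three, hdiag] at e01 e12
  rw [Fin.sum_univ_three] at h1 h2
  have hT : (∑ i, ∑ j, if i < j then
        (u t i - ρ i) * (H i j + H j i) * (u t j - ρ j) else 0)
      = (u t 0 - ρ 0) * (H 0 1 + H 1 0) * (u t 1 - ρ 1)
      + (u t 0 - ρ 0) * (H 0 2 + H 2 0) * (u t 2 - ρ 2)
      + (u t 1 - ρ 1) * (H 1 2 + H 2 1) * (u t 2 - ρ 2) := by
    simp [Fin.sum_univ_three]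
  have s0 : (u t 0 - ρ 0) + (u t 1 - ρ 1) + (u t 2 - ρ 2) = 0 := by linarith
  have hineq : (∑ i, ∑ j, if i < j then
        (u t i - ρ i) * (H i j + H j i) * (u t j - ρ j) else 0)
      ≤ -(γ / 2 - M) * ∑ i, (u t i - ρ i) ^ 2 := by
    rw [hT, Fin.sum_univ_three]
    exact aux_ineq γ M _ _ _ _ _ _ (hη 0 1 (by decide)) (hη 0 2 (by decide))
      (hη 1 2 (by decide)) s0
  refine ⟨?_, hineq, ?_⟩
  · have hD : ∀ i, HasDerivAt (fun s => u s i - ρ i * Real.log (u s i))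
        ((u t i - ρ i) * (H.mulVec (u t) i - ∑ j, ∑ k, u t j * H j k * u t k)) t := by
      intro i
      have h := (hu t i).sub (HasDerivAt.const_mul (ρ i) ((hu t i).log (hupos t i).ne'))
      refine h.congr_deriv (Eq.symm ?_)
      have hne := (hupos t i).ne'
      rw [mul_div_cancel_left₀ _ hne]
      ring
    have hsum := HasDerivAt.fun_sum (fun i (_ : i ∈ Finset.univ) => hD i)
    refine hsum.congr_deriv (Eq.symm ?_)
    rw [hT, Fin.sum_univ_three]
    simp only [Matrix.mulVec, dotProduct, Fin.sum_univ_three, hdiag]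
    linear_combination (-(u t 0 - ρ 0)) * e01 + (-((u t 0 - ρ 0) + (u t 1 - ρ 1))) * e12
      + ((u t 0 * H 0 1 * u t 1 + u t 0 * H 0 2 * u t 2 + u t 1 * H 1 0 * u t 0
          + u t 1 * H 1 2 * u t 2 + u t 2 * H 2 0 * u t 0 + u t 2 * H 2 1 * u t 1)
        - (H 2 0 * ρ 0 + H 2 1 * ρ 1)) * h1
      - ((u t 0 * H 0 1 * u t 1 + u t 0 * H 0 2 * u t 2 + u t 1 * H 1 0 * u t 0
          + u t 1 * H 1 2 * u t 2 + u t 2 * H 2 0 * u t 0 + u t 2 * H 2 1 * u t 1)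
        - (H 2 0 * ρ 0 + H 2 1 * ρ 1)) * h2
  · intro h0 i
    rw [h0, Fin.sum_univ_three] at hineq
    have hS : (u t 0 - ρ 0) ^ 2 + (u t 1 - ρ 1) ^ 2 + (u t 2 - ρ 2) ^ 2 ≤ 0 := by
      nlinarith [hineq]
    fin_cases i
    · have : u t 0 - ρ 0 = 0 := by
        nlinarith [sq_nonneg (u t 1 - ρ 1), sq_nonneg (u t 2 - ρ 2)]
      simpa using sub_eq_zero.mp this
    · have : u t 1 - ρ 1 = 0 := by
        nlinarith [sq_nonneg (u t 0 - ρ 0), sq_nonneg (u t 2 - ρ 2)]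
      simpa using sub_eq_zero.mp this
    · have : u t 2 - ρ 2 = 0 := by
        nlinarith [sq_nonneg (u t 0 - ρ 0), sq_nonneg (u t 1 - ρ 1)]
      simpa using sub_eq_zero.mp this
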